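/- Closed-form cost–capacity trade-off for the binary multiplier channel with power constraint (Example 3): for Γ ∈ [0,1] define C(Γ) := max { (1/2)·h₂((1−Γ)p∗ + Γp₁) : p∗, p₀, p₁ ∈ [0,1] and (1−Γ)p∗ + (Γ/2)(p₀ + p₁) = 1/4 }. Then C(Γ) = (1/2)·h₂((1+2Γ)/4) for Γ ∈ [0, 1/2], and C(Γ) = 1/2 for Γ ∈ [1/2, 1]. -/
import Mathlib


/-!
Closed-form cost–capacity trade-off for the binary multiplier channel with
power constraint (Example 3).
-/

/-- The binary entropy function (base 2), with `h₂ 0 = h₂ 1 = 0`. -/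
noncomputable def binH (p : ℝ) : ℝ :=
  -(p * Real.logb 2 p) - ((1 - p) * Real.logb 2 (1 - p))

/-- The capacity expression of Theorem 1 for the multiplier channel `Y = S·X`
with `S ∼ Bernoulli(1/2)`, binary probing with cost `Λ(a) = a` and budget `Γ`,
under the input power constraint `P(X=1) ≤ 1/4`:
`C(Γ) = max { (1/2)h₂((1−Γ)p∗ + Γp₁) : p∗,p₀,p₁ ∈ [0,1],
(1−Γ)p∗ + (Γ/2)(p₀+p₁) = 1/4 }`. -/
noncomputable def Cmult (Γ : ℝ) : ℝ :=
  sSup {r : ℝ | ∃ pa p₀ p₁ : ℝ,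
    pa ∈ Set.Icc (0 : ℝ) 1 ∧ p₀ ∈ Set.Icc (0 : ℝ) 1 ∧ p₁ ∈ Set.Icc (0 : ℝ) 1 ∧
    (1 - Γ) * pa + (Γ / 2) * (p₀ + p₁) = 1 / 4 ∧
    r = (1 / 2) * binH ((1 - Γ) * pa + Γ * p₁)}

lemma binH_eq (p : ℝ) : binH p = Real.binEntropy p / Real.log 2 := by
  unfold binH Real.binEntropy
  rw [Real.log_inv, Real.log_inv]
  simp only [Real.logb]
  ring

lemma binH_mono {a b : ℝ} (ha : 0 ≤ a) (hab : a ≤ b) (hb : b ≤ 1 / 2) :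
    binH a ≤ binH b := by
  rw [binH_eq, binH_eq]
  have hlog : (0 : ℝ) < Real.log 2 := Real.log_pos (by norm_num)
  have := Real.binEntropy_strictMonoOn.monotoneOn
    (a := a) (b := b)
    ⟨ha, by rw [show (2 : ℝ)⁻¹ = 1/2 by norm_num]; linarith⟩
    ⟨by linarith, by rw [show (2 : ℝ)⁻¹ = 1/2 by norm_num]; linarith⟩ hab
  exact div_le_div_of_nonneg_right this hlog.le |>.trans_eq rfl

lemma binH_le_one (p : ℝ) : binH p ≤ 1 := by
  rw [binH_eq]
  have hlog : (0 : ℝ) < Real.log 2 := Real.log_pos (by norm_num)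
  rw [div_le_one hlog]
  exact Real.binEntropy_le_log_two

lemma binH_half : binH (1 / 2) = 1 := by
  rw [binH_eq, show (1 : ℝ)/2 = 2⁻¹ by norm_num, Real.binEntropy_two_inv]
  exact div_self (Real.log_pos (by norm_num)).ne'

/-- **Example 3 (binary multiplier channel with power constraint).**
`C(Γ) = (1/2)h₂((1+2Γ)/4)` for `Γ ∈ [0, 1/2]`, and `C(Γ) = 1/2` for
`Γ ∈ [1/2, 1]`. -/
theorem multiplier_channel_tradeoff :
    (∀ Γ : ℝ, 0 ≤ Γ → Γ ≤ 1 / 2 → Cmult Γ = (1 / 2) * binH ((1 + 2 * Γ) / 4)) ∧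
    (∀ Γ : ℝ, 1 / 2 ≤ Γ → Γ ≤ 1 → Cmult Γ = 1 / 2) := by
  constructor
  · intro Γ h0 h1
    have hΓ1 : (0 : ℝ) < 1 - Γ := by linarith
    have hmem : (1 / 2) * binH ((1 + 2 * Γ) / 4) ∈
        {r : ℝ | ∃ pa p₀ p₁ : ℝ,
          pa ∈ Set.Icc (0 : ℝ) 1 ∧ p₀ ∈ Set.Icc (0 : ℝ) 1 ∧ p₁ ∈ Set.Icc (0 : ℝ) 1 ∧
          (1 - Γ) * pa + (Γ / 2) * (p₀ + p₁) = 1 / 4 ∧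
          r = (1 / 2) * binH ((1 - Γ) * pa + Γ * p₁)} := by
      refine ⟨(1/4 - Γ/2) / (1 - Γ), 0, 1, ?_, ?_, ?_, ?_, ?_⟩
      · constructor
        · apply div_nonneg (by linarith) hΓ1.le
        · rw [div_le_one hΓ1]; linarith
      · norm_num
      · norm_num
      · rw [mul_div_cancel₀ _ hΓ1.ne']; ring
      · rw [mul_div_cancel₀ _ hΓ1.ne']; ring_nf
    refine le_antisymm (csSup_le ⟨_, hmem⟩ ?_) (le_csSup ⟨(1/2) * binH ((1+2*Γ)/4), ?_⟩ hmem)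
    · rintro r ⟨pa, p₀, p₁, ⟨hpa0, hpa1⟩, ⟨hp00, hp01⟩, ⟨hp10, hp11⟩, hc, rfl⟩
      have ht0 : 0 ≤ (1 - Γ) * pa + Γ * p₁ := by
        have : 0 ≤ (1 - Γ) * pa := by positivity
        nlinarith
      have ht1 : (1 - Γ) * pa + Γ * p₁ ≤ (1 + 2 * Γ) / 4 := by nlinarith
      have := binH_mono ht0 ht1 (by linarith)
      linarith
    · rintro r ⟨pa, p₀, p₁, ⟨hpa0, hpa1⟩, ⟨hp00, hp01⟩, ⟨hp10, hp11⟩, hc, rfl⟩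
      have ht0 : 0 ≤ (1 - Γ) * pa + Γ * p₁ := by
        have : 0 ≤ (1 - Γ) * pa := by positivity
        nlinarith
      have ht1 : (1 - Γ) * pa + Γ * p₁ ≤ (1 + 2 * Γ) / 4 := by nlinarith
      have := binH_mono ht0 ht1 (by linarith)
      linarith
  · intro Γ h0 h1
    have hΓ : (0 : ℝ) < Γ := by linarith
    have hmem : (1 / 2 : ℝ) ∈
        {r : ℝ | ∃ pa p₀ p₁ : ℝ,
          pa ∈ Set.Icc (0 : ℝ) 1 ∧ p₀ ∈ Set.Icc (0 : ℝ) 1 ∧ p₁ ∈ Set.Icc (0 : ℝ) 1 ∧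
          (1 - Γ) * pa + (Γ / 2) * (p₀ + p₁) = 1 / 4 ∧
          r = (1 / 2) * binH ((1 - Γ) * pa + Γ * p₁)} := by
      refine ⟨0, 0, 1/(2*Γ), ?_, ?_, ?_, ?_, ?_⟩
      · norm_num
      · norm_num
      · constructor
        · positivity
        · rw [div_le_one (by positivity)]; linarith
      · field_simp; ring
      · have ht : (1 - Γ) * 0 + Γ * (1/(2*Γ)) = 1/2 := by field_simp; ring
        rw [ht, binH_half]; norm_num
    refine le_antisymm (csSup_le ⟨_, hmem⟩ ?_) (le_csSup ⟨1/2, ?_⟩ hmem)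
    · rintro r ⟨pa, p₀, p₁, _, _, _, _, rfl⟩
      have := binH_le_one ((1 - Γ) * pa + Γ * p₁)
      linarith
    · rintro r ⟨pa, p₀, p₁, _, _, _, _, rfl⟩
      have := binH_le_one ((1 - Γ) * pa + Γ * p₁)
      linarith
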